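/- Let G be a finite simple graph, r ∈ V(G), T ⊆ V(G) \ {r}, and k a natural number. Then the number of vertex sets C that are seclusion-maximal with respect to the property "r ∈ C, C ∩ T = ∅, G[C] is connected, and |N_G(C)| ≤ k" is at most 4^k. -/

import Mathlib

open SimpleGraph
set_option linter.unusedSectionVars false

/-- The open neighborhood of a vertex set `C` in a graph `G`. -/
def openNbhd {V : Type} (G : SimpleGraph V) (C : Set V) : Set V :=
  {v | v ∉ C ∧ ∃ u ∈ C, G.Adj u v}

/-- `C` is seclusion-maximal for property `Pr`: it satisfies `Pr` and every strict
superset satisfying `Pr` has a strictly larger open neighborhood. -/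
def SeclusionMaximal {V : Type} (G : SimpleGraph V) (Pr : Set V → Prop) (C : Set V) : Prop :=
  Pr C ∧ ∀ C' : Set V, C ⊂ C' → Pr C' → (openNbhd G C).ncard < (openNbhd G C').ncard

namespace Stmt18

variable {V : Type} [Fintype V] (G : SimpleGraph V)

/-- `a` and `b` are joined by a walk whose support lies in `S`. -/
def RIn (S : Set V) (a b : V) : Prop := ∃ p : G.Walk a b, ∀ x ∈ p.support, x ∈ S

variable {G}

lemma RIn.mem_left {S : Set V} {a b : V} (h : RIn G S a b) : a ∈ S := by
  obtain ⟨p, hp⟩ := h; exact hp a p.start_mem_support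

lemma RIn.mem_right {S : Set V} {a b : V} (h : RIn G S a b) : b ∈ S := by
  obtain ⟨p, hp⟩ := h; exact hp b p.end_mem_support

lemma RIn.refl {S : Set V} {a : V} (ha : a ∈ S) : RIn G S a a :=
  ⟨SimpleGraph.Walk.nil, by simp [ha]⟩

lemma RIn.symm {S : Set V} {a b : V} (h : RIn G S a b) : RIn G S b a := by
  obtain ⟨p, hp⟩ := h
  exact ⟨p.reverse, by simpa [SimpleGraph.Walk.support_reverse] using hp⟩

lemma RIn.trans {S : Set V} {a b c : V} (h : RIn G S a b) (h' : RIn G S b c) :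
    RIn G S a c := by
  obtain ⟨p, hp⟩ := h; obtain ⟨q, hq⟩ := h'
  refine ⟨p.append q, fun x hx => ?_⟩
  rw [SimpleGraph.Walk.support_append] at hx
  rcases List.mem_append.1 hx with h1 | h2
  · exact hp x h1
  · exact hq x (List.mem_of_mem_tail h2)

lemma RIn.mono {S S' : Set V} (hss : S ⊆ S') {a b : V} (h : RIn G S a b) :
    RIn G S' a b := by
  obtain ⟨p, hp⟩ := h; exact ⟨p, fun x hx => hss (hp x hx)⟩

lemma RIn.concat {S : Set V} {a u v : V} (h : RIn G S a u) (huv : G.Adj u v)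
    (hv : v ∈ S) : RIn G S a v := by
  obtain ⟨p, hp⟩ := h
  refine ⟨p.concat huv, fun x hx => ?_⟩
  rw [SimpleGraph.Walk.support_concat, List.mem_append] at hx
  rcases hx with h1 | h2
  · exact hp x h1
  · exact (List.mem_singleton.1 h2) ▸ hv

lemma RIn_of_mem_support {S : Set V} {a b x : V} (p : G.Walk a b)
    (hp : ∀ y ∈ p.support, y ∈ S) (hx : x ∈ p.support) : RIn G S a x := by
  classical
  exact ⟨p.takeUntil x hx, fun y hy => hp y (p.support_takeUntil_subset hx hy)⟩

/-- Bridge: connectivity of induced subgraph via walks with support in `S`. -/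
lemma induce_connected_iff {S : Set V} :
    (G.induce S).Connected ↔ S.Nonempty ∧ ∀ a ∈ S, ∀ b ∈ S, RIn G S a b := by
  rw [connected_induce_iff, Subgraph.connected_iff_forall_exists_walk_subgraph]
  constructor
  · rintro ⟨hne, h⟩
    refine ⟨by simpa using hne, fun a ha b hb => ?_⟩
    obtain ⟨p, hp⟩ := h (by simpa using ha) (by simpa using hb)
    exact ⟨p, fun x hx => by
      have := hp.1 ((p.mem_verts_toSubgraph).2 hx); simpa using this⟩
  · rintro ⟨hne, h⟩
    refine ⟨by simpa using hne, fun {a b} ha hb => ?_⟩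
    obtain ⟨p, hp⟩ := h a (by simpa using ha) b (by simpa using hb)
    refine ⟨p, le_trans p.toSubgraph_le_induce_support ?_⟩
    exact Subgraph.induce_mono_right (fun x hx => hp x hx)

/-- If `A` is closed under taking neighbors inside `C`, then walks in `C` starting
in `A` stay in `A`. -/
lemma stay_of_closed {A C : Set V} (hcl : ∀ x ∈ A, ∀ y, G.Adj x y → y ∈ C → y ∈ A)
    {a b : V} (h : RIn G C a b) (ha : a ∈ A) : b ∈ A := by
  obtain ⟨p, hp⟩ := h
  induction p with
  | nil => exact ha
  | @cons u x w huv q ih =>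
    have hx : x ∈ A := hcl u ha x huv (hp x (by simp))
    exact ih hx (fun y hy => hp y (by simp [hy]))

variable (G)

/-- neighborhood size outside the deleted set `X`. -/
noncomputable def fX (X C : Set V) : ℕ := (openNbhd G C \ X).ncard

/-- The property of being a candidate secluded set. -/
def Prp (T X R : Set V) (k : ℕ) (C : Set V) : Prop :=
  R ⊆ C ∧ C ∩ T = ∅ ∧ C ∩ X = ∅ ∧ (G.induce C).Connected ∧ fX G X C ≤ k

/-- Seclusion-maximal sets, where neighborhoods are counted outside `X`. -/
noncomputable def Fam (T X R : Set V) (k : ℕ) : Set (Set V) :=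
  {C | Prp G T X R k C ∧
    ∀ C' : Set V, C ⊂ C' → Prp G T X R k C' → fX G X C < fX G X C'}

def Om (T X R : Set V) : Set (Set V) := {C | R ⊆ C ∧ C ∩ (T ∪ X) = ∅}

noncomputable def lam (T X R : Set V) : ℕ := sInf (fX G X '' Om T X R)

variable {G}

lemma nbhd_union_subset (X A B : Set V) :
    openNbhd G (A ∪ B) \ X ⊆ (openNbhd G A \ X) ∪ (openNbhd G B \ X) := by
  rintro v ⟨⟨hv, u, hu, hadj⟩, hvX⟩
  rcases hu with hu | hu
  · exact Or.inl ⟨⟨fun h => hv (Or.inl h), u, hu, hadj⟩, hvX⟩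
  · exact Or.inr ⟨⟨fun h => hv (Or.inr h), u, hu, hadj⟩, hvX⟩

lemma nbhd_inter_subset (X A B : Set V) :
    openNbhd G (A ∩ B) \ X ⊆ (openNbhd G A \ X) ∪ (openNbhd G B \ X) := by
  rintro v ⟨⟨hv, u, hu, hadj⟩, hvX⟩
  by_cases hvA : v ∈ A
  · exact Or.inr ⟨⟨fun h => hv ⟨hvA, h⟩, u, hu.2, hadj⟩, hvX⟩
  · exact Or.inl ⟨⟨hvA, u, hu.1, hadj⟩, hvX⟩

lemma nbhd_both_subset (X A B : Set V) :
    (openNbhd G (A ∪ B) \ X) ∩ (openNbhd G (A ∩ B) \ X) ⊆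
      (openNbhd G A \ X) ∩ (openNbhd G B \ X) := by
  rintro v ⟨⟨⟨hv, _⟩, hvX⟩, ⟨⟨_, u, hu, hadj⟩, _⟩⟩
  exact ⟨⟨⟨fun h => hv (Or.inl h), u, hu.1, hadj⟩, hvX⟩,
    ⟨⟨fun h => hv (Or.inr h), u, hu.2, hadj⟩, hvX⟩⟩

lemma submodular (X A B : Set V) :
    fX G X (A ∪ B) + fX G X (A ∩ B) ≤ fX G X A + fX G X B := by
  unfold fX
  set P := openNbhd G (A ∪ B) \ X
  set Q := openNbhd G (A ∩ B) \ X
  set U := openNbhd G A \ X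
  set W := openNbhd G B \ X
  have h1 : P ∪ Q ⊆ U ∪ W := Set.union_subset (nbhd_union_subset X A B) (nbhd_inter_subset X A B)
  have h2 : P ∩ Q ⊆ U ∩ W := nbhd_both_subset X A B
  have e1 := Set.ncard_union_add_ncard_inter P Q (Set.toFinite _) (Set.toFinite _)
  have e2 := Set.ncard_union_add_ncard_inter U W (Set.toFinite _) (Set.toFinite _)
  have l1 : (P ∪ Q).ncard ≤ (U ∪ W).ncard := Set.ncard_le_ncard h1 (Set.toFinite _)
  have l2 : (P ∩ Q).ncard ≤ (U ∩ W).ncard := Set.ncard_le_ncard h2 (Set.toFinite _)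
  omega

lemma lam_le {T X R C : Set V} (hC : C ∈ Om T X R) : lam G T X R ≤ fX G X C :=
  Nat.sInf_le ⟨C, hC, rfl⟩

lemma exists_min {T X R : Set V} (h : (Om T X R).Nonempty) :
    ∃ D ∈ Om T X R, fX G X D = lam G T X R := by
  have : (fX G X '' Om T X R).Nonempty := h.image _
  have := Nat.sInf_mem this
  obtain ⟨D, hD, hval⟩ := this
  exact ⟨D, hD, hval⟩

lemma fam_subset_om {T X R : Set V} {k : ℕ} {C : Set V} (h : C ∈ Fam G T X R k) :
    C ∈ Om T X R := by
  obtain ⟨⟨h1, h2, h3, _, _⟩, _⟩ := h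
  exact ⟨h1, by rw [Set.inter_union_distrib_left, h2, h3, Set.union_empty]⟩

lemma fam_empty {T X R : Set V} {k : ℕ} (h : k < lam G T X R) : Fam G T X R k = ∅ := by
  ext C
  simp only [Set.mem_empty_iff_false, iff_false]
  intro hC
  have h1 := lam_le (G := G) (fam_subset_om hC)
  have h2 := hC.1.2.2.2.2
  omega

/-! ### Components via `RIn` -/

variable (G)

def compR (S R : Set V) : Set V := {w | ∃ a ∈ R, RIn G S a w}

variable {G}

lemma compR_subset (S R : Set V) : compR G S R ⊆ S := by
  rintro w ⟨a, _, h⟩; exact h.mem_right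

lemma subset_compR {S R : Set V} (h : R ⊆ S) : R ⊆ compR G S R :=
  fun a ha => ⟨a, ha, RIn.refl (h ha)⟩

lemma rin_compR {S R : Set V} {a w : V} (ha : a ∈ R) (h : RIn G S a w) :
    RIn G (compR G S R) a w := by
  obtain ⟨p, hp⟩ := h
  exact ⟨p, fun x hx => ⟨a, ha, RIn_of_mem_support p hp hx⟩⟩

lemma compR_connected {S R : Set V} (hR : (G.induce R).Connected) (hRS : R ⊆ S) :
    (G.induce (compR G S R)).Connected := by
  rw [induce_connected_iff] at hR ⊢
  obtain ⟨hRne, hRr⟩ := hR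
  refine ⟨hRne.mono (subset_compR hRS), ?_⟩
  rintro w ⟨a, ha, hw⟩ w' ⟨a', ha', hw'⟩
  have h1 : RIn G (compR G S R) a w := rin_compR ha hw
  have h2 : RIn G (compR G S R) a' w' := rin_compR ha' hw'
  have h3 : RIn G (compR G S R) a a' := (hRr a ha a' ha').mono (subset_compR hRS)
  exact (h1.symm.trans h3).trans h2

lemma compR_nbhd {S R : Set V} : openNbhd G (compR G S R) ⊆ openNbhd G S := by
  rintro v ⟨hv, u, hu, hadj⟩
  by_cases hvS : v ∈ S
  · exfalso
    obtain ⟨a, ha, hru⟩ := hu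
    exact hv ⟨a, ha, hru.concat hadj hvS⟩
  · exact ⟨hvS, u, compR_subset S R hu, hadj⟩

lemma subset_compR_of_connected {S R C : Set V} (hRne : R.Nonempty) (hRC : R ⊆ C)
    (hCconn : (G.induce C).Connected) (hCS : C ⊆ S) : C ⊆ compR G S R := by
  rw [induce_connected_iff] at hCconn
  obtain ⟨a, ha⟩ := hRne
  intro w hw
  exact ⟨a, ha, (hCconn.2 a (hRC ha) w hw).mono hCS⟩

/-! ### Minimizers -/

lemma union_min {T X R A B : Set V}
    (hA : A ∈ Om T X R ∧ fX G X A = lam G T X R)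
    (hB : B ∈ Om T X R ∧ fX G X B = lam G T X R) :
    A ∪ B ∈ Om T X R ∧ fX G X (A ∪ B) = lam G T X R := by
  obtain ⟨⟨hA1, hA2⟩, hAv⟩ := hA
  obtain ⟨⟨hB1, hB2⟩, hBv⟩ := hB
  have hU : A ∪ B ∈ Om T X R :=
    ⟨hA1.trans Set.subset_union_left,
     by rw [Set.union_inter_distrib_right, hA2, hB2, Set.union_empty]⟩
  have hI : A ∩ B ∈ Om T X R :=
    ⟨Set.subset_inter hA1 hB1,
     Set.subset_empty_iff.mp (hA2 ▸ Set.inter_subset_inter_left _ Set.inter_subset_left)⟩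
  have h1 := lam_le (G := G) hU
  have h2 := lam_le (G := G) hI
  have h3 := submodular (G := G) X A B
  exact ⟨hU, by omega⟩

lemma sUnion_min {T X R : Set V} (𝒮 : Set (Set V)) (hne : 𝒮.Nonempty)
    (hsub : ∀ D ∈ 𝒮, D ∈ Om T X R ∧ fX G X D = lam G T X R) :
    ⋃₀ 𝒮 ∈ Om T X R ∧ fX G X (⋃₀ 𝒮) = lam G T X R := by
  have hfin : 𝒮.Finite := Set.toFinite _
  revert hne hsub
  refine Set.Finite.induction_on 𝒮 hfin (fun hne _ => absurd hne (by simp)) ?_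
  intro a s ha hs ih _ hsub
  rw [Set.sUnion_insert]
  rcases s.eq_empty_or_nonempty with hse | hse
  · subst hse; simpa using hsub a (by simp)
  · exact union_min (hsub a (by simp))
      (ih hse fun D hD => hsub D (Set.mem_insert_of_mem a hD))

lemma fX_le_insert (X D : Set V) (v : V) : fX G X D ≤ fX G (X ∪ {v}) D + 1 := by
  have hsub : openNbhd G D \ X ⊆ insert v (openNbhd G D \ (X ∪ {v})) := by
    rintro x ⟨hn, hx⟩
    by_cases hxv : x = v
    · exact Or.inl hxv
    · exact Or.inr ⟨hn, by simp [hxv, hx]⟩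
  calc fX G X D ≤ (insert v (openNbhd G D \ (X ∪ {v}))).ncard :=
        Set.ncard_le_ncard hsub (Set.toFinite _)
    _ ≤ fX G (X ∪ {v}) D + 1 := Set.ncard_insert_le _ _

theorem key (μ : ℕ) : ∀ T X R : Set V, ∀ k : ℕ,
    (G.induce R).Connected → R ∩ (T ∪ X) = ∅ → lam G T X R ≤ k →
    2 * k - lam G T X R = μ → (Fam G T X R k).ncard ≤ 2 ^ (2 * k - lam G T X R) := by
  induction μ using Nat.strong_induction_on with
  | _ μ IH =>
  intro T X R k hconn hdisj hlk hmu
  have hRne : R.Nonempty := by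
    have h := induce_connected_iff.mp hconn; exact h.1
  have hRmem : ∀ x ∈ R, x ∉ T ∪ X := by
    intro x hx hmem
    have : x ∈ R ∩ (T ∪ X) := ⟨hx, hmem⟩
    rw [hdisj] at this; exact this
  have hROm : R ∈ Om T X R := ⟨subset_rfl, hdisj⟩
  set M : Set (Set V) := {D | D ∈ Om T X R ∧ fX G X D = lam G T X R} with hMdef
  have hMne : M.Nonempty := by
    obtain ⟨D, hD, hval⟩ := exists_min (G := G) ⟨R, hROm⟩
    exact ⟨D, hD, hval⟩
  have hCstar := sUnion_min M hMne (fun D hD => hD)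
  set S := ⋃₀ M with hSdef
  have hDsubS : ∀ D ∈ M, D ⊆ S := fun D hD => Set.subset_sUnion_of_mem hD
  have hRS : R ⊆ S := hCstar.1.1
  set c := compR G S R with hcdef
  have hcS : c ⊆ S := compR_subset S R
  have hRc : R ⊆ c := subset_compR hRS
  have hcdisj : c ∩ (T ∪ X) = ∅ := by
    rw [← Set.subset_empty_iff, ← hCstar.1.2]
    exact Set.inter_subset_inter_left _ hcS
  have hcOm : c ∈ Om T X R := ⟨hRc, hcdisj⟩
  have hcval : fX G X c = lam G T X R := by
    refine le_antisymm ?_ (lam_le (G := G) hcOm)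
    calc fX G X c ≤ fX G X S :=
          Set.ncard_le_ncard (Set.diff_subset_diff_left compR_nbhd) (Set.toFinite _)
      _ = lam G T X R := hCstar.2
  have hcconn : (G.induce c).Connected := compR_connected hconn hRS
  -- pushing lemma
  have push : ∀ C ∈ Fam G T X R k, c ⊆ C := by
    intro C hC
    have hCOm : C ∈ Om T X R := fam_subset_om hC
    obtain ⟨⟨hRC, hCT, hCX, hCconn, hCk⟩, hmax⟩ := hC
    set D := C ∪ S with hDdef
    have hIOm : C ∩ S ∈ Om T X R := by
      refine ⟨Set.subset_inter hRC hRS, ?_⟩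
      rw [← Set.subset_empty_iff, ← hCOm.2]
      exact Set.inter_subset_inter_left _ Set.inter_subset_left
    have hDdisj : D ∩ (T ∪ X) = ∅ := by
      rw [hDdef, Set.union_inter_distrib_right, hCOm.2, hCstar.1.2, Set.union_empty]
    have hfD : fX G X D ≤ fX G X C := by
      have h3 := submodular (G := G) X C S
      have h4 := lam_le (G := G) hIOm
      have h5 := hCstar.2
      rw [hDdef]
      omega
    set D' := compR G D R with hD'def
    have hRD : R ⊆ D := hRC.trans Set.subset_union_left
    have hD'nb : fX G X D' ≤ fX G X D :=
      Set.ncard_le_ncard (Set.diff_subset_diff_left compR_nbhd) (Set.toFinite _)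
    have hCD' : C ⊆ D' := subset_compR_of_connected hRne hRC hCconn Set.subset_union_left
    have hD'D : D' ⊆ D := compR_subset D R
    have hD'Prp : Prp G T X R k D' := by
      refine ⟨hRC.trans hCD', ?_, ?_, compR_connected hconn hRD, by omega⟩
      · rw [← Set.subset_empty_iff, ← hDdisj]
        rintro x ⟨h1, h2⟩
        exact ⟨hD'D h1, Or.inl h2⟩
      · rw [← Set.subset_empty_iff, ← hDdisj]
        rintro x ⟨h1, h2⟩
        exact ⟨hD'D h1, Or.inr h2⟩
    have heq : D' = C := by
      by_contra hne
      have hss : C ⊂ D' := Set.ssubset_iff_subset_ne.mpr ⟨hCD', fun h => hne h.symm⟩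
      have := hmax D' hss hD'Prp
      omega
    rintro w ⟨a, ha, hw⟩
    rw [← heq]
    exact ⟨a, ha, hw.mono Set.subset_union_right⟩
  rcases Set.eq_empty_or_nonempty (openNbhd G c \ X) with hbase | hbr
  · -- base case: no free neighbors, Fam ⊆ {c}
    have hsub : Fam G T X R k ⊆ {c} := by
      intro C hC
      have hcC := push C hC
      obtain ⟨⟨hRC, hCT, hCX, hCconn, hCk⟩, -⟩ := hC
      have hclosed : ∀ x ∈ c, ∀ y, G.Adj x y → y ∈ C → y ∈ c := by
        intro x hx y hxy hyC
        by_contra hyc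
        have hyX : y ∉ X := fun h => by
          have : y ∈ C ∩ X := ⟨hyC, h⟩
          rw [hCX] at this; exact this
        have : y ∈ openNbhd G c \ X := ⟨⟨hyc, x, hx, hxy⟩, hyX⟩
        rw [hbase] at this; exact this
      have hCc : C ⊆ c := by
        intro w hw
        obtain ⟨a, ha⟩ := hRne
        have hrc := induce_connected_iff.mp hCconn
        exact stay_of_closed hclosed (hrc.2 a (hRC ha) w hw) (hRc ha)
      simp only [Set.mem_singleton_iff]
      exact le_antisymm hCc hcC
    calc (Fam G T X R k).ncard ≤ ({c} : Set (Set V)).ncard :=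
          Set.ncard_le_ncard hsub (Set.toFinite _)
      _ = 1 := Set.ncard_singleton _
      _ ≤ 2 ^ (2 * k - lam G T X R) := Nat.one_le_two_pow
  · -- branching case
    obtain ⟨v, hvnb, hvX⟩ := hbr
    obtain ⟨hvc, u, huc, hadj⟩ := hvnb
    have hlam1 : 1 ≤ lam G T X R := by
      rw [← hcval]
      have : (openNbhd G c \ X).Nonempty := ⟨v, ⟨hvc, u, huc, hadj⟩, hvX⟩
      exact (Set.ncard_pos (Set.toFinite _)).mpr this
    have hk1 : 1 ≤ k := le_trans hlam1 hlk
    have hvR : v ∉ R := fun h => hvc (hRc h)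
    have hvS : v ∉ S := by
      have := compR_nbhd (G := G) (S := S) (R := R) ⟨hvc, u, huc, hadj⟩
      exact this.1
    -- branch A : v is a neighbor
    set XA := X ∪ {v} with hXAdef
    have hdisjA : R ∩ (T ∪ XA) = ∅ := by
      rw [Set.eq_empty_iff_forall_notMem]
      rintro x ⟨hxR, hx⟩
      rcases hx with hx | hx | hx
      · exact hRmem x hxR (Or.inl hx)
      · exact hRmem x hxR (Or.inr hx)
      · exact hvR (hx ▸ hxR)
    have hROmA : R ∈ Om T XA R := ⟨subset_rfl, hdisjA⟩
    have hlamA : lam G T X R ≤ lam G T XA R + 1 := by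
      obtain ⟨D, hDOmA, hDval⟩ := exists_min (G := G) ⟨R, hROmA⟩
      have hDOm : D ∈ Om T X R := by
        refine ⟨hDOmA.1, ?_⟩
        rw [← Set.subset_empty_iff, ← hDOmA.2]
        refine Set.inter_subset_inter_right _ ?_
        exact Set.union_subset_union_right _ Set.subset_union_left
      have h1 := lam_le (G := G) hDOm
      have h2 := fX_le_insert (G := G) X D v
      rw [← hXAdef] at h2
      omega
    have hmemA : ∀ C ∈ Fam G T X R k, v ∉ C → C ∈ Fam G T XA R (k - 1) := by
      intro C hC hvC
      have hcC := push C hC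
      obtain ⟨⟨hRC, hCT, hCX, hCconn, hCk⟩, hmax⟩ := hC
      have hvNC : v ∈ openNbhd G C \ X := ⟨⟨hvC, u, hcC huc, hadj⟩, hvX⟩
      have hdiffeq : openNbhd G C \ XA = (openNbhd G C \ X) \ {v} := by
        rw [hXAdef]; ext x; simp [and_assoc]; tauto
      have hfxa : fX G XA C = fX G X C - 1 := by
        rw [fX, hdiffeq, Set.ncard_diff_singleton_of_mem hvNC]
        rfl
      have hfx1 : 1 ≤ fX G X C :=
        (Set.ncard_pos (Set.toFinite _)).mpr ⟨v, hvNC⟩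
      have hCXA : C ∩ XA = ∅ := by
        rw [hXAdef, Set.inter_union_distrib_left, hCX, Set.empty_union,
          Set.eq_empty_iff_forall_notMem]
        rintro x ⟨hxC, hxv⟩
        rw [Set.mem_singleton_iff] at hxv
        exact hvC (hxv ▸ hxC)
      refine ⟨⟨hRC, hCT, hCXA, hCconn, by omega⟩, ?_⟩
      intro C' hss hP'
      have hP'X : Prp G T X R k C' := by
        refine ⟨hP'.1, hP'.2.1, ?_, hP'.2.2.2.1, ?_⟩
        · rw [← Set.subset_empty_iff, ← hP'.2.2.1]
          refine Set.inter_subset_inter_right _ ?_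
          rw [hXAdef]; exact Set.subset_union_left
        · have := fX_le_insert (G := G) X C' v
          have h5 := hP'.2.2.2.2
          rw [← hXAdef] at this
          omega
      have hlt := hmax C' hss hP'X
      have hub := fX_le_insert (G := G) X C' v
      rw [← hXAdef] at hub
      omega
    have hbndA : (Fam G T XA R (k - 1)).ncard ≤ 2 ^ (2 * k - lam G T X R - 1) := by
      by_cases hA : lam G T XA R ≤ k - 1
      · have hIHa := IH (2 * (k - 1) - lam G T XA R) (by omega) T XA R (k - 1)
          hconn hdisjA hA rfl
        calc (Fam G T XA R (k - 1)).ncard ≤ 2 ^ (2 * (k - 1) - lam G T XA R) := hIHa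
          _ ≤ 2 ^ (2 * k - lam G T X R - 1) :=
            Nat.pow_le_pow_right (by norm_num) (by omega)
      · rw [fam_empty (by omega)]
        simp
    by_cases hvT : v ∈ T
    · -- every C avoids v
      have hsub : Fam G T X R k ⊆ Fam G T XA R (k - 1) := by
        intro C hC
        refine hmemA C hC fun hvC => ?_
        have : v ∈ C ∩ T := ⟨hvC, hvT⟩
        rw [hC.1.2.1] at this; exact this
      calc (Fam G T X R k).ncard ≤ (Fam G T XA R (k - 1)).ncard :=
            Set.ncard_le_ncard hsub (Set.toFinite _)
        _ ≤ 2 ^ (2 * k - lam G T X R - 1) := hbndA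
        _ ≤ 2 ^ (2 * k - lam G T X R) := Nat.pow_le_pow_right (by norm_num) (by omega)
    · -- branch B : v joins the component
      set RB := c ∪ {v} with hRBdef
      have hconnB : (G.induce RB).Connected := by
        have h1 : (G.induce {u, v}).Connected := G.induce_pair_connected_of_adj hadj
        have h2 := induce_union_connected hcconn.preconnected h1.preconnected ⟨u, huc, by simp⟩
        have hEq : c ∪ {u, v} = RB := by
          rw [hRBdef]; ext x; simp only [Set.mem_union, Set.mem_insert_iff,
            Set.mem_singleton_iff]
          constructor
          · rintro (h | h | h)
            · exact Or.inl h
            · exact Or.inl (h ▸ huc)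
            · exact Or.inr h
          · rintro (h | h)
            · exact Or.inl h
            · exact Or.inr (Or.inr h)
        rwa [hEq] at h2
      have hdisjB : RB ∩ (T ∪ X) = ∅ := by
        rw [hRBdef, Set.union_inter_distrib_right, hcdisj, Set.empty_union,
          Set.eq_empty_iff_forall_notMem]
        rintro x ⟨hxv, hx⟩
        rw [Set.mem_singleton_iff] at hxv
        subst hxv
        rcases hx with hx | hx
        · exact hvT hx
        · exact hvX hx
      have hRBOm : RB ∈ Om T X RB := ⟨subset_rfl, hdisjB⟩
      have hRRB : R ⊆ RB := hRc.trans Set.subset_union_left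
      have hlamB : lam G T X R + 1 ≤ lam G T X RB := by
        obtain ⟨D, hDOmB, hDval⟩ := exists_min (G := G) ⟨RB, hRBOm⟩
        have hDOm : D ∈ Om T X R := ⟨hRRB.trans hDOmB.1, hDOmB.2⟩
        have h1 := lam_le (G := G) hDOm
        have hne : fX G X D ≠ lam G T X R := by
          intro hEqv
          have hDM : D ∈ M := ⟨hDOm, hEqv⟩
          have : v ∈ S := hDsubS D hDM (hDOmB.1 (Or.inr rfl))
          exact hvS this
        omega
      have hmemB : ∀ C ∈ Fam G T X R k, v ∈ C → C ∈ Fam G T X RB k := by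
        intro C hC hvC
        have hcC := push C hC
        obtain ⟨⟨hRC, hCT, hCX, hCconn, hCk⟩, hmax⟩ := hC
        have hRBC : RB ⊆ C := by
          rw [hRBdef]
          exact Set.union_subset hcC (by simpa using hvC)
        refine ⟨⟨hRBC, hCT, hCX, hCconn, hCk⟩, ?_⟩
        intro C' hss hP'
        exact hmax C' hss ⟨hRRB.trans hP'.1, hP'.2⟩
      have hbndB : (Fam G T X RB k).ncard ≤ 2 ^ (2 * k - lam G T X R - 1) := by
        by_cases hB : lam G T X RB ≤ k
        · have hIHb := IH (2 * k - lam G T X RB) (by omega) T X RB k hconnB hdisjB hB rfl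
          calc (Fam G T X RB k).ncard ≤ 2 ^ (2 * k - lam G T X RB) := hIHb
            _ ≤ 2 ^ (2 * k - lam G T X R - 1) :=
              Nat.pow_le_pow_right (by norm_num) (by omega)
        · rw [fam_empty (by omega)]
          simp
      have hsplit : Fam G T X R k ⊆ Fam G T XA R (k - 1) ∪ Fam G T X RB k := by
        intro C hC
        by_cases hvC : v ∈ C
        · exact Or.inr (hmemB C hC hvC)
        · exact Or.inl (hmemA C hC hvC)
      calc (Fam G T X R k).ncard
          ≤ (Fam G T XA R (k - 1) ∪ Fam G T X RB k).ncard :=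
            Set.ncard_le_ncard hsplit (Set.toFinite _)
        _ ≤ (Fam G T XA R (k - 1)).ncard + (Fam G T X RB k).ncard :=
            Set.ncard_union_le _ _
        _ ≤ 2 ^ (2 * k - lam G T X R - 1) + 2 ^ (2 * k - lam G T X R - 1) :=
            Nat.add_le_add hbndA hbndB
        _ = 2 ^ (2 * k - lam G T X R) := by
            obtain ⟨n, hn⟩ : ∃ n, 2 * k - lam G T X R = n + 1 :=
              ⟨2 * k - lam G T X R - 1, by omega⟩
            rw [hn]
            simp only [Nat.add_sub_cancel]
            rw [pow_succ]
            ring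

end Stmt18

/-- The bound on the number of important separators, phrased via secluded subgraphs. -/
theorem stmt18 {V : Type} [Fintype V] (G : SimpleGraph V) (r : V) (T : Set V)
    (hT : r ∉ T) (k : ℕ) :
    {C : Set V | SeclusionMaximal G (fun C =>
        r ∈ C ∧ C ∩ T = ∅ ∧
        (G.induce C).Connected ∧
        (openNbhd G C).ncard ≤ k) C}.ncard ≤ 4 ^ k := by
  have hPr : (fun C => r ∈ C ∧ C ∩ T = ∅ ∧ (G.induce C).Connected ∧
      (openNbhd G C).ncard ≤ k) = Stmt18.Prp G T ∅ ({r} : Set V) k := by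
    funext C
    simp only [Stmt18.Prp, Stmt18.fX, Set.diff_empty, Set.singleton_subset_iff,
      Set.inter_empty, eq_self_iff_true, true_and, and_true]
  have hset : {C : Set V | SeclusionMaximal G (fun C =>
        r ∈ C ∧ C ∩ T = ∅ ∧ (G.induce C).Connected ∧
        (openNbhd G C).ncard ≤ k) C} = Stmt18.Fam G T ∅ ({r} : Set V) k := by
    ext C
    simp only [Set.mem_setOf_eq, SeclusionMaximal, Stmt18.Fam, Stmt18.fX,
      Set.diff_empty, ← hPr]
  rw [hset]
  have hconn : (G.induce ({r} : Set V)).Connected := by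
    rw [Stmt18.induce_connected_iff]
    refine ⟨⟨r, rfl⟩, ?_⟩
    intro a ha b hb
    rw [Set.mem_singleton_iff] at ha hb
    subst ha; subst hb
    exact Stmt18.RIn.refl rfl
  have hdisj : ({r} : Set V) ∩ (T ∪ ∅) = ∅ := by
    rw [Set.union_empty, Set.eq_empty_iff_forall_notMem]
    rintro x ⟨hx, hxT⟩
    rw [Set.mem_singleton_iff] at hx
    exact hT (hx ▸ hxT)
  rcases le_or_gt (Stmt18.lam G T ∅ ({r} : Set V)) k with h | h
  · calc (Stmt18.Fam G T ∅ ({r} : Set V) k).ncard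
        ≤ 2 ^ (2 * k - Stmt18.lam G T ∅ ({r} : Set V)) :=
          Stmt18.key (2 * k - Stmt18.lam G T ∅ ({r} : Set V)) T ∅ {r} k hconn hdisj h rfl
      _ ≤ 4 ^ k := by
          rw [show (4 : ℕ) = 2 ^ 2 from rfl, ← pow_mul]
          exact Nat.pow_le_pow_right (by norm_num) (by omega)
  · rw [Stmt18.fam_empty h]
    simp
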